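/- Let k ≥ 1 be an integer, let p_1, …, p_k be positive reals, let I ≥ ∑_{j=1}^k p_j, W ≥ 0, γ > 0 be reals with W + γ·(I − ∑_{j=1}^k p_j) > 0, and let τ > 0 with τ' := τ/(1+γτ). Set z'_i := p_i/(W + γ·I) for 1 ≤ i ≤ k. Then for every subset U ⊆ {1,…,k}: (∑_{i∈U} p_i) / ( W + γ·I − γ·∑_{j=1}^k p_j ) > τ if and only if ∑_{i∈U} z'_i + γ·τ'·∑_{j∈{1,…,k}∖U} z'_j > τ'. (This is the equivalence expressing the coverage event for the SINR under interference cancellation and signal combination in terms of the STINR values.) -/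

import Mathlib

open Finset

/-- the coverage event for the SINR under interference cancellation and signal
combination (combining set `U`, cancelling the other signals among the `k` strongest) is
equivalent to `∑_{i∈U} z'_i + γτ'·∑_{j∉U} z'_j > τ'` in terms of the STINR values
`z'_i = p_i/(W+γI)` and `τ' = τ/(1+γτ)`. -/
theorem statement9 (k : ℕ) (hk : 1 ≤ k) (p : Fin k → ℝ) (hp : ∀ i, 0 < p i)
    (I W γ τ : ℝ) (hI : ∑ j, p j ≤ I) (hW : 0 ≤ W) (hγ : 0 < γ)
    (hpos : 0 < W + γ * (I - ∑ j, p j)) (hτ : 0 < τ)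
    (U : Finset (Fin k)) :
    τ < (∑ i ∈ U, p i) / (W + γ * I - γ * ∑ j, p j) ↔
      τ/(1+γ*τ) < (∑ i ∈ U, p i / (W + γ * I)) +
        γ * (τ/(1+γ*τ)) * ∑ j ∈ Uᶜ, p j / (W + γ * I) := by
  set S := ∑ j, p j with hS
  set A := ∑ i ∈ U, p i with hA
  have hAS : ∑ j ∈ Uᶜ, p j = S - A := by
    rw [hS, ← Finset.sum_add_sum_compl U p] ; ring
  have hS0 : 0 < S := Finset.sum_pos (fun i _ => hp i) (by simp [Finset.univ_nonempty_iff]; exact Fin.pos_iff_nonempty.mp hk)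
  have hd : 0 < W + γ * I - γ * S := by nlinarith
  have hD : 0 < W + γ * I := by nlinarith
  have h1 : 0 < 1 + γ * τ := by nlinarith
  rw [← Finset.sum_div, ← Finset.sum_div, hAS, ← hA, lt_div_iff₀ hd,
    div_add' _ _ _ (ne_of_gt hD), div_lt_div_iff₀ h1 hD]
  have key : (A + γ * (τ / (1 + γ * τ)) * ((S - A) / (W + γ * I)) * (W + γ * I)) * (1 + γ * τ)
      = A * (1 + γ * τ) + γ * τ * (S - A) := by
    field_simp
  rw [key]
  constructor <;> intro h <;> nlinarith
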